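/- For any positive integer r, the volume of the Reeve tetrahedron with vertices (0,0,0), (1,0,0), (0,1,0), (1,1,r) equals r/6. Consequently, Reeve tetrahedra for different r have the same number of lattice points but different volumes, so no formula computing volume from lattice point counts (interior and boundary) can hold for all lattice polyhedra in ℝ³. -/

import Mathlib

open MeasureTheory
open scoped ENNReal

/-- The Reeve tetrahedron with parameter `r`, as a subset of ℝ³. -/
def reeve (r : ℤ) : Set (Fin 3 → ℝ) :=
  convexHull ℝ {![0, 0, 0], ![1, 0, 0], ![0, 1, 0], ![1, 1, (r : ℝ)]}

/-- Number of interior lattice points of a set in ℝ³. -/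
noncomputable def intCount (S : Set (Fin 3 → ℝ)) : ℕ :=
  {p : Fin 3 → ℤ | (fun i => (p i : ℝ)) ∈ interior S}.ncard

/-- Number of boundary lattice points of a set in ℝ³. -/
noncomputable def bdCount (S : Set (Fin 3 → ℝ)) : ℕ :=
  {p : Fin 3 → ℤ | (fun i => (p i : ℝ)) ∈ frontier S}.ncard

lemma tri_vol (a : ℝ) (ha : 0 ≤ a) :
    volume {q : ℝ × ℝ | 0 ≤ q.1 ∧ 0 ≤ q.2 ∧ q.1 + q.2 ≤ a} = ENNReal.ofReal (a^2/2) := by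
  have hm : MeasurableSet {q : ℝ × ℝ | 0 ≤ q.1 ∧ 0 ≤ q.2 ∧ q.1 + q.2 ≤ a} := by
    apply MeasurableSet.inter
    · exact measurableSet_le measurable_const measurable_fst
    apply MeasurableSet.inter
    · exact measurableSet_le measurable_const measurable_snd
    · exact measurableSet_le (measurable_fst.add measurable_snd) measurable_const
  rw [show (volume : Measure (ℝ × ℝ)) = (volume : Measure ℝ).prod volume from rfl,
    Measure.prod_apply hm]
  have hslice : ∀ x : ℝ, (Prod.mk x ⁻¹' {q : ℝ × ℝ | 0 ≤ q.1 ∧ 0 ≤ q.2 ∧ q.1 + q.2 ≤ a})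
      = if 0 ≤ x then Set.Icc 0 (a - x) else ∅ := by
    intro x
    split_ifs with hx
    · ext z; simp [Set.mem_Icc, hx]; intro _; constructor <;> intro h <;> linarith
    · ext z; simp [hx]
  have hfun : (fun x => volume (Prod.mk x ⁻¹' {q : ℝ × ℝ | 0 ≤ q.1 ∧ 0 ≤ q.2 ∧ q.1 + q.2 ≤ a}))
      = Set.indicator (Set.Icc 0 a) (fun x => ENNReal.ofReal (a - x)) := by
    funext x
    rw [hslice]
    by_cases hx : 0 ≤ x
    · simp only [if_pos hx, Real.volume_Icc, sub_zero]
      by_cases hxa : x ≤ a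
      · rw [Set.indicator_of_mem (Set.mem_Icc.2 ⟨hx, hxa⟩)]
      · rw [Set.indicator_of_notMem (by simp [Set.mem_Icc, hxa]),
          ENNReal.ofReal_eq_zero]
        linarith
    · simp [if_neg hx, Set.indicator_of_notMem, Set.mem_Icc, hx]
  simp only [hfun, lintegral_indicator measurableSet_Icc _]
  rw [← ofReal_integral_eq_lintegral_ofReal]
  · congr 1
    rw [MeasureTheory.integral_Icc_eq_integral_Ioc, ← intervalIntegral.integral_of_le ha]
    have : ∫ x in (0:ℝ)..a, (a - x) = a^2/2 := by
      rw [intervalIntegral.integral_sub intervalIntegrable_const intervalIntegral.intervalIntegrable_id]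
      simp [integral_id]
      ring
    rw [this]
  · exact (ContinuousOn.integrableOn_compact isCompact_Icc (by fun_prop))
  · filter_upwards [self_mem_ae_restrict measurableSet_Icc] with x hx
    simp [Set.mem_Icc] at hx ⊢
    linarith [hx.2]

lemma simplex3_vol :
    volume {q : ℝ × ℝ × ℝ | 0 ≤ q.1 ∧ 0 ≤ q.2.1 ∧ 0 ≤ q.2.2 ∧ q.1 + q.2.1 + q.2.2 ≤ 1}
      = ENNReal.ofReal (1/6) := by
  set S : Set (ℝ × ℝ × ℝ) := {q | 0 ≤ q.1 ∧ 0 ≤ q.2.1 ∧ 0 ≤ q.2.2 ∧ q.1 + q.2.1 + q.2.2 ≤ 1}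
    with hS
  have hm : MeasurableSet S := by
    apply MeasurableSet.inter
    · exact measurableSet_le measurable_const measurable_fst
    apply MeasurableSet.inter
    · exact measurableSet_le measurable_const (measurable_fst.comp measurable_snd)
    apply MeasurableSet.inter
    · exact measurableSet_le measurable_const (measurable_snd.comp measurable_snd)
    · exact measurableSet_le
        ((measurable_fst.add (measurable_fst.comp measurable_snd)).add
          (measurable_snd.comp measurable_snd)) measurable_const
  rw [show (volume : Measure (ℝ × ℝ × ℝ)) = (volume : Measure ℝ).prod volume from rfl,
    Measure.prod_apply hm]
  have hfun : (fun x => volume (Prod.mk x ⁻¹' S))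
      = Set.indicator (Set.Icc 0 1) (fun x => ENNReal.ofReal ((1-x)^2/2)) := by
    funext x
    by_cases hx : x ∈ Set.Icc (0:ℝ) 1
    · rw [Set.indicator_of_mem hx]
      have : Prod.mk x ⁻¹' S = {q : ℝ × ℝ | 0 ≤ q.1 ∧ 0 ≤ q.2 ∧ q.1 + q.2 ≤ 1 - x} := by
        ext q; simp only [hS, Set.mem_preimage, Set.mem_setOf_eq, hx.1, true_and]
        constructor <;> rintro ⟨h1, h2, h3⟩ <;> exact ⟨h1, h2, by linarith⟩
      rw [this, tri_vol _ (by simp at hx; linarith [hx.2])]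
    · rw [Set.indicator_of_notMem hx]
      simp only [Set.mem_Icc, not_and_or, not_le] at hx
      have : Prod.mk x ⁻¹' S = ∅ := by
        ext q; simp only [hS, Set.mem_preimage, Set.mem_setOf_eq, Set.mem_empty_iff_false,
          iff_false]
        rintro ⟨h1, h2, h3, h4⟩
        rcases hx with hx | hx <;> linarith
      simp [this]
  rw [hfun, lintegral_indicator measurableSet_Icc _]
  rw [← ofReal_integral_eq_lintegral_ofReal]
  · congr 1
    rw [MeasureTheory.integral_Icc_eq_integral_Ioc,
      ← intervalIntegral.integral_of_le (by norm_num : (0:ℝ) ≤ 1)]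
    have : ∫ x in (0:ℝ)..1, (1-x)^2/2 = 1/6 := by
      have h1 : ∀ x : ℝ, (1-x)^2/2 = (1 - 2*x + x^2)/2 := by intro x; ring
      simp_rw [h1]
      rw [intervalIntegral.integral_div]
      have i1 : IntervalIntegrable (fun x : ℝ => 1 - 2*x) volume 0 1 :=
        Continuous.intervalIntegrable (by continuity) 0 1
      have i2 : IntervalIntegrable (fun x : ℝ => x ^ 2) volume 0 1 :=
        Continuous.intervalIntegrable (by continuity) 0 1
      have i3 : IntervalIntegrable (fun x : ℝ => (1:ℝ)) volume 0 1 :=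
        Continuous.intervalIntegrable (by continuity) 0 1
      have i4 : IntervalIntegrable (fun x : ℝ => 2*x) volume 0 1 :=
        Continuous.intervalIntegrable (by continuity) 0 1
      rw [intervalIntegral.integral_add i1 i2, intervalIntegral.integral_sub i3 i4,
          intervalIntegral.integral_const_mul]
      simp [integral_pow, integral_id]
      norm_num
    rw [this]
  · exact (ContinuousOn.integrableOn_compact isCompact_Icc (by fun_prop))
  · filter_upwards with x; positivity

lemma corner_vol :
    volume {x : Fin 3 → ℝ | 0 ≤ x 0 ∧ 0 ≤ x 1 ∧ 0 ≤ x 2 ∧ x 0 + x 1 + x 2 ≤ 1}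
      = ENNReal.ofReal (1/6) := by
  have h₁ := MeasureTheory.volume_preserving_piFinSuccAbove (fun _ : Fin 3 => ℝ) 0
  have h₂ := MeasureTheory.volume_preserving_finTwoArrow ℝ
  have h := ((MeasurePreserving.id (volume : Measure ℝ)).prod h₂).comp h₁
  set S : Set (ℝ × ℝ × ℝ) := {q | 0 ≤ q.1 ∧ 0 ≤ q.2.1 ∧ 0 ≤ q.2.2 ∧ q.1 + q.2.1 + q.2.2 ≤ 1}
  have hm : MeasurableSet S := by
    apply MeasurableSet.inter
    · exact measurableSet_le measurable_const measurable_fst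
    apply MeasurableSet.inter
    · exact measurableSet_le measurable_const (measurable_fst.comp measurable_snd)
    apply MeasurableSet.inter
    · exact measurableSet_le measurable_const (measurable_snd.comp measurable_snd)
    · exact measurableSet_le
        ((measurable_fst.add (measurable_fst.comp measurable_snd)).add
          (measurable_snd.comp measurable_snd)) measurable_const
  have hpre : (Prod.map id (MeasurableEquiv.finTwoArrow (α := ℝ)) ∘
      (MeasurableEquiv.piFinSuccAbove (fun _ : Fin 3 => ℝ) 0)) ⁻¹' S
      = {x : Fin 3 → ℝ | 0 ≤ x 0 ∧ 0 ≤ x 1 ∧ 0 ≤ x 2 ∧ x 0 + x 1 + x 2 ≤ 1} := by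
    ext x
    simp [S, MeasurableEquiv.piFinSuccAbove, MeasurableEquiv.finTwoArrow, Fin.succAbove, Fin.tail]
  rw [← hpre]
  rw [h.measure_preimage hm.nullMeasurableSet]
  exact simplex3_vol

lemma corner_hull :
    convexHull ℝ {![0,0,0], ![1,0,0], ![0,1,0], ![0,0,(1:ℝ)]}
      = {x : Fin 3 → ℝ | 0 ≤ x 0 ∧ 0 ≤ x 1 ∧ 0 ≤ x 2 ∧ x 0 + x 1 + x 2 ≤ 1} := by
  apply Set.Subset.antisymm
  · apply convexHull_min
    · rintro p (rfl | rfl | rfl | rfl) <;>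
        simp [Set.mem_setOf_eq] <;> norm_num
    · rintro x ⟨hx0, hx1, hx2, hxs⟩ y ⟨hy0, hy1, hy2, hys⟩ a b ha hb hab
      refine ⟨?_, ?_, ?_, ?_⟩ <;> simp only [Pi.add_apply, Pi.smul_apply, smul_eq_mul] <;>
        nlinarith
  · rintro x ⟨hx0, hx1, hx2, hxs⟩
    have hmem : ∀ i : Fin 4,
        (![![0,0,0], ![1,0,0], ![0,1,0], ![0,0,(1:ℝ)]] i) ∈
          convexHull ℝ ({![0,0,0], ![1,0,0], ![0,1,0], ![0,0,(1:ℝ)]} : Set (Fin 3 → ℝ)) := by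
      intro i
      apply subset_convexHull
      fin_cases i <;> simp
    have := (convex_convexHull ℝ ({![0,0,0], ![1,0,0], ![0,1,0], ![0,0,(1:ℝ)]} : Set (Fin 3 → ℝ))).sum_mem
      (t := Finset.univ) (w := ![1 - x 0 - x 1 - x 2, x 0, x 1, x 2])
      (z := ![![0,0,0], ![1,0,0], ![0,1,0], ![0,0,(1:ℝ)]])
      (by intro i _; fin_cases i <;> simp <;> linarith)
      (by simp [Fin.sum_univ_four]; ring)
      (fun i _ => hmem i)
    convert this using 1
    funext j
    simp [Fin.sum_univ_four]
    fin_cases j <;> simp <;> ring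

def Hset (r : ℤ) : Set (Fin 3 → ℝ) :=
  {p | 0 ≤ p 2 ∧ p 2 ≤ r * p 0 ∧ p 2 ≤ r * p 1 ∧ r * (p 0 + p 1) ≤ r + p 2}

lemma reeve_subset (r : ℤ) (hr : 0 < r) : reeve r ⊆ Hset r := by
  have hr' : (0:ℝ) < r := by exact_mod_cast hr
  apply convexHull_min
  · rintro p (rfl | rfl | rfl | rfl) <;>
      refine ⟨?_, ?_, ?_, ?_⟩ <;> simp <;> nlinarith
  · rintro x ⟨hx0, hx1, hx2, hxs⟩ y ⟨hy0, hy1, hy2, hys⟩ a b ha hb hab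
    refine ⟨?_, ?_, ?_, ?_⟩ <;> simp only [Pi.add_apply, Pi.smul_apply, smul_eq_mul] <;>
      nlinarith

lemma int_cases (r x y z : ℤ) (hr : 0 < r) (h0 : 0 ≤ z) (h1 : z ≤ r * x) (h2 : z ≤ r * y)
    (h3 : r * (x + y) ≤ r + z) :
    (x = 0 ∧ y = 0 ∧ z = 0) ∨ (x = 1 ∧ y = 0 ∧ z = 0) ∨ (x = 0 ∧ y = 1 ∧ z = 0) ∨
      (x = 1 ∧ y = 1 ∧ z = r) := by
  have hzr : z ≤ r := by nlinarith
  rcases eq_or_lt_of_le h0 with hz0 | hz0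
  · have hx : 0 ≤ x := by nlinarith
    have hy : 0 ≤ y := by nlinarith
    have hxy : x + y ≤ 1 := by nlinarith
    omega
  · have hx : 1 ≤ x := by nlinarith
    have hy : 1 ≤ y := by nlinarith
    have hzr' : r ≤ z := by nlinarith
    have hxy : x + y ≤ 2 := by nlinarith
    omega

noncomputable def Amap (r : ℤ) : (Fin 3 → ℝ) →ₗ[ℝ] (Fin 3 → ℝ) :=
  Matrix.toLin' !![1,0,1; 0,1,1; 0,0,(r:ℝ)]

lemma reeve_eq_image (r : ℤ) :
    reeve r = Amap r '' (convexHull ℝ {![0,0,0], ![1,0,0], ![0,1,0], ![0,0,(1:ℝ)]}) := by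
  rw [LinearMap.image_convexHull]
  unfold reeve
  congr 1
  have key : ∀ v : Fin 3 → ℝ, Amap r v = ![v 0 + v 2, v 1 + v 2, r * v 2] := by
    intro v; funext j
    fin_cases j <;>
      simp [Amap, Matrix.toLin'_apply, Matrix.mulVec, dotProduct, Fin.sum_univ_three,
        Matrix.vecHead, Matrix.vecTail]
  rw [Set.image_insert_eq, Set.image_insert_eq, Set.image_insert_eq, Set.image_singleton,
    key, key, key, key]
  norm_num [Matrix.cons_val_two, Matrix.tail_cons, Matrix.head_cons]

lemma reeve_volume (r : ℤ) (hr : 0 < r) :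
    volume (reeve r) = ENNReal.ofReal ((r : ℝ) / 6) := by
  rw [reeve_eq_image, Measure.addHaar_image_linearMap, corner_hull, corner_vol]
  have hdet : LinearMap.det (Amap r) = (r : ℝ) := by
    rw [Amap, LinearMap.det_toLin']
    simp [Matrix.det_fin_three, Matrix.vecHead, Matrix.vecTail]
  rw [hdet, abs_of_pos (by exact_mod_cast hr), ← ENNReal.ofReal_mul (by positivity)]
  congr 1
  ring

lemma cast_v0 : (fun i => ((![0,0,0] : Fin 3 → ℤ) i : ℝ)) = ![0,0,0] := by
  funext j; fin_cases j <;> simp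
lemma cast_v1 : (fun i => ((![1,0,0] : Fin 3 → ℤ) i : ℝ)) = ![1,0,0] := by
  funext j; fin_cases j <;> simp
lemma cast_v2 : (fun i => ((![0,1,0] : Fin 3 → ℤ) i : ℝ)) = ![0,1,0] := by
  funext j; fin_cases j <;> simp
lemma cast_v3 (r : ℤ) : (fun i => ((![1,1,r] : Fin 3 → ℤ) i : ℝ)) = ![1,1,(r:ℝ)] := by
  funext j; fin_cases j <;> simp

lemma lattice_in_reeve (r : ℤ) (hr : 0 < r) (p : Fin 3 → ℤ)
    (hp : (fun i => (p i : ℝ)) ∈ reeve r) :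
    p = ![0,0,0] ∨ p = ![1,0,0] ∨ p = ![0,1,0] ∨ p = ![1,1,r] := by
  obtain ⟨h0, h1, h2, h3⟩ := reeve_subset r hr hp
  simp only [Set.mem_setOf_eq] at h0 h1 h2 h3
  have h0' : (0:ℤ) ≤ p 2 := by exact_mod_cast h0
  have h1' : p 2 ≤ r * p 0 := by exact_mod_cast h1
  have h2' : p 2 ≤ r * p 1 := by exact_mod_cast h2
  have h3' : r * (p 0 + p 1) ≤ r + p 2 := by exact_mod_cast h3
  rcases int_cases r (p 0) (p 1) (p 2) hr h0' h1' h2' h3' with h | h | h | h <;>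
    [left; (right; left); (right; right; left); (right; right; right)] <;>
    · funext j; fin_cases j <;> simp [h.1, h.2.1, h.2.2]

lemma vertex_mem_reeve (r : ℤ) (p : Fin 3 → ℤ)
    (hp : p = ![0,0,0] ∨ p = ![1,0,0] ∨ p = ![0,1,0] ∨ p = ![1,1,r]) :
    (fun i => (p i : ℝ)) ∈ reeve r := by
  apply subset_convexHull
  rcases hp with rfl | rfl | rfl | rfl
  · rw [cast_v0]; simp
  · rw [cast_v1]; simp
  · rw [cast_v2]; simp
  · rw [cast_v3]; simp

-- a point whose some constraint is tight is not in the interior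
lemma vertex_not_interior (r : ℤ) (hr : 0 < r) (p : Fin 3 → ℤ)
    (hp : p = ![0,0,0] ∨ p = ![1,0,0] ∨ p = ![0,1,0] ∨ p = ![1,1,r]) :
    (fun i => (p i : ℝ)) ∉ interior (reeve r) := by
  have hr' : (0:ℝ) < r := by exact_mod_cast hr
  intro hin
  rw [mem_interior_iff_mem_nhds, Metric.mem_nhds_iff] at hin
  obtain ⟨ε, hε, hball⟩ := hin
  set v : Fin 3 → ℝ := fun i => (p i : ℝ)
  -- choose a perturbation direction i and sign s so that v' violates Hset
  have key : ∀ (i : Fin 3) (c : ℝ), |c| < ε →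
      Function.update v i (v i + c) ∈ Hset r := by
    intro i c hc
    apply reeve_subset r hr
    apply hball
    rw [Metric.mem_ball, dist_pi_lt_iff hε]
    intro j
    by_cases hji : j = i
    · subst hji; simp [Real.dist_eq, hc]
    · simp [Function.update_of_ne hji, hε]
  have hεpos : |(-(ε/2))| < ε := by rw [abs_neg, abs_of_pos (by linarith)]; linarith
  have hεpos' : |ε/2| < ε := by rw [abs_of_pos (by linarith)]; linarith
  rcases hp with rfl | rfl | rfl | rfl
  · -- perturb z down
    have h := (key 2 (-(ε/2)) hεpos).1
    rw [Function.update_self] at h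
    simp only [v, cast_v0] at h
    norm_num [Matrix.cons_val_two, Matrix.tail_cons, Matrix.head_cons] at h
    linarith
  · -- perturb y down ; z ≤ r * y fails
    have h := (key 1 (-(ε/2)) hεpos).2.2.1
    simp only [v, cast_v1] at h
    rw [Function.update_self] at h
    rw [Function.update_of_ne (by decide)] at h
    norm_num [Matrix.cons_val_two, Matrix.tail_cons, Matrix.head_cons] at h
    nlinarith
  · -- perturb x down ; z ≤ r * x fails
    have h := (key 0 (-(ε/2)) hεpos).2.1
    simp only [v, cast_v2] at h
    rw [Function.update_self] at h
    rw [Function.update_of_ne (by decide)] at h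
    norm_num [Matrix.cons_val_two, Matrix.tail_cons, Matrix.head_cons] at h
    nlinarith
  · -- perturb x up ; r (x+y) ≤ r + z fails
    have h := (key 0 (ε/2) hεpos').2.2.2
    simp only [v, cast_v3] at h
    rw [Function.update_self] at h
    rw [Function.update_of_ne (by decide), Function.update_of_ne (by decide)] at h
    norm_num [Matrix.cons_val_two, Matrix.tail_cons, Matrix.head_cons] at h
    nlinarith

lemma reeve_isClosed (r : ℤ) : IsClosed (reeve r) :=
  (Set.Finite.isCompact_convexHull (𝕜 := ℝ) (Set.toFinite _)).isClosed

lemma intCount_reeve (r : ℤ) (hr : 0 < r) : intCount (reeve r) = 0 := by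
  unfold intCount
  have hempty : {p : Fin 3 → ℤ | (fun i => (p i : ℝ)) ∈ interior (reeve r)}
      = (∅ : Set (Fin 3 → ℤ)) := by
    ext p
    simp only [Set.mem_setOf_eq, Set.mem_empty_iff_false, iff_false]
    intro h
    exact vertex_not_interior r hr p
      (lattice_in_reeve r hr p (interior_subset h)) h
  rw [hempty]
  exact Set.ncard_empty _

lemma bdCount_reeve (r : ℤ) (hr : 0 < r) : bdCount (reeve r) = 4 := by
  unfold bdCount
  have hset : {p : Fin 3 → ℤ | (fun i => (p i : ℝ)) ∈ frontier (reeve r)}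
      = {![0,0,0], ![1,0,0], ![0,1,0], ![1,1,r]} := by
    ext p
    rw [(reeve_isClosed r).frontier_eq]
    simp only [Set.mem_setOf_eq, Set.mem_diff, Set.mem_insert_iff, Set.mem_singleton_iff]
    constructor
    · rintro ⟨h1, _⟩
      exact lattice_in_reeve r hr p h1
    · intro hp
      exact ⟨vertex_mem_reeve r p hp, vertex_not_interior r hr p hp⟩
  rw [hset]
  have d01 : (![0,0,0] : Fin 3 → ℤ) ≠ ![1,0,0] := by decide
  have d02 : (![0,0,0] : Fin 3 → ℤ) ≠ ![0,1,0] := by decide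
  have d12 : (![1,0,0] : Fin 3 → ℤ) ≠ ![0,1,0] := by decide
  have d03 : (![0,0,0] : Fin 3 → ℤ) ≠ ![1,1,r] := by
    intro h; have := congrFun h 0; simp at this
  have d13 : (![1,0,0] : Fin 3 → ℤ) ≠ ![1,1,r] := by
    intro h; have := congrFun h 1; simp at this
  have d23 : (![0,1,0] : Fin 3 → ℤ) ≠ ![1,1,r] := by
    intro h; have := congrFun h 0; simp at this
  rw [Set.ncard_insert_of_notMem (by simp [d01, d02, d03]) (Set.toFinite _),
    Set.ncard_insert_of_notMem (by simp [d12, d13]) (Set.toFinite _),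
    Set.ncard_insert_of_notMem (by simp [d23]) (Set.toFinite _),
    Set.ncard_singleton]

theorem stmt_13 :
    (∀ r : ℤ, 0 < r → volume (reeve r) = ENNReal.ofReal ((r : ℝ) / 6)) ∧
      ¬ ∃ f : ℕ → ℕ → ℝ≥0∞, ∀ r : ℤ, 0 < r →
        volume (reeve r) = f (intCount (reeve r)) (bdCount (reeve r)) := by
  constructor
  · exact reeve_volume
  · rintro ⟨f, hf⟩
    have e1 := hf 1 one_pos
    have e2 := hf 2 (by norm_num)
    rw [reeve_volume 1 one_pos, intCount_reeve 1 one_pos, bdCount_reeve 1 one_pos] at e1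
    rw [reeve_volume 2 (by norm_num), intCount_reeve 2 (by norm_num),
      bdCount_reeve 2 (by norm_num)] at e2
    rw [← e2] at e1
    rw [ENNReal.ofReal_eq_ofReal_iff (by norm_num) (by norm_num)] at e1
    norm_num at e1
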